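/- arXiv:2405.15415 — 3 statements merged into one kernel-verified Lean document; each statement's English description precedes it below -/
import Mathlib

section
/- The CPPI loss is an unbiased estimate of the population loss: for every θ, E[L^CP(θ)] = L(θ), where L^CP(θ) = (1/(KN))∑_{k=1}^K ∑_{i=1}^N ℓ_θ(X̃_i, f^{(k)}(X̃_i)) − (1/n)∑_{k=1}^K ∑_{i∈D^{(k)}} ℓ_θ(X_i, f^{(k)}(X_i)) + (1/n)∑_{i=1}^n ℓ_θ(X_i, Y_i). -/
open MeasureTheory

/-- The CPPI loss is an unbiased estimate of the population loss.
The model trained leaving out fold `D k` is `fun x => f (W k ω) x`, where `W k` is the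
(random) training outcome, independent of the fold-`k` labeled data and of the unlabeled
data. -/
theorem cppi_unbiased
    {Ω 𝒳 𝒴 𝕎 Θ : Type*} [MeasurableSpace Ω] [MeasurableSpace 𝒳] [MeasurableSpace 𝒴]
    [MeasurableSpace 𝕎]
    (μ : Measure Ω) [IsProbabilityMeasure μ]
    (P : Measure (𝒳 × 𝒴)) [IsProbabilityMeasure P]
    (n N K : ℕ) (hn : 0 < n) (hN : 0 < N) (hK : 0 < K) (hKn : K ∣ n)
    (D : Fin K → Finset (Fin n))
    (hdisj : ∀ k l, k ≠ l → Disjoint (D k) (D l))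
    (hcover : ∀ i : Fin n, ∃ k, i ∈ D k)
    (hcard : ∀ k, (D k).card = n / K)
    (X : Fin n → Ω → 𝒳) (Y : Fin n → Ω → 𝒴) (Xt : Fin N → Ω → 𝒳) (W : Fin K → Ω → 𝕎)
    (hX : ∀ i, Measurable (X i)) (hY : ∀ i, Measurable (Y i)) (hXt : ∀ i, Measurable (Xt i))
    (hW : ∀ k, Measurable (W k))
    (f : 𝕎 → 𝒳 → 𝒴) (hf : Measurable fun q : 𝕎 × 𝒳 => f q.1 q.2)
    (hlab : ∀ i, μ.map (fun ω => (X i ω, Y i ω)) = P)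
    -- the model trained without fold k is independent of the fold-k labeled data:
    (hindep_lab : ∀ k, ∀ i ∈ D k,
      μ.map (fun ω => (W k ω, (X i ω, Y i ω))) = (μ.map (W k)).prod P)
    -- the models are independent of the unlabeled data:
    (hindep_unlab : ∀ k j,
      μ.map (fun ω => (W k ω, Xt j ω)) = (μ.map (W k)).prod (P.map Prod.fst))
    (ℓ : Θ → 𝒳 → 𝒴 → ℝ) (θ : Θ)
    (hint : Integrable (fun p : 𝒳 × 𝒴 => ℓ θ p.1 p.2) P)
    (hintf : ∀ k, Integrable (fun q : 𝕎 × 𝒳 => ℓ θ q.2 (f q.1 q.2))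
      ((μ.map (W k)).prod (P.map Prod.fst))) :
    ∫ ω, ((1 / ((K : ℝ) * N)) * ∑ k, ∑ j, ℓ θ (Xt j ω) (f (W k ω) (Xt j ω))
        - (1 / (n : ℝ)) * ∑ k, ∑ i ∈ D k, ℓ θ (X i ω) (f (W k ω) (X i ω))
        + (1 / (n : ℝ)) * ∑ i, ℓ θ (X i ω) (Y i ω)) ∂μ
      = ∫ p, ℓ θ p.1 p.2 ∂P := by
  classical
  set g : 𝕎 × 𝒳 → ℝ := fun q => ℓ θ q.2 (f q.1 q.2) with hg_def
  set I : Fin K → ℝ := fun k => ∫ q, g q ∂((μ.map (W k)).prod (P.map Prod.fst)) with hI_def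
  have hWmap : ∀ k, IsProbabilityMeasure (μ.map (W k)) :=
    fun k => Measure.isProbabilityMeasure_map (hW k).aemeasurable
  -- laws of (W k, X i) for i ∈ D k
  have hlaw_lab : ∀ k, ∀ i ∈ D k,
      μ.map (fun ω => (W k ω, X i ω)) = (μ.map (W k)).prod (P.map Prod.fst) := by
    intro k i hi
    haveI := hWmap k
    have hπ : Measurable (Prod.map (id : 𝕎 → 𝕎) (Prod.fst : 𝒳 × 𝒴 → 𝒳)) :=
      measurable_id.prodMap measurable_fst
    have h1 : (fun ω => (W k ω, X i ω))
        = (Prod.map (id : 𝕎 → 𝕎) (Prod.fst : 𝒳 × 𝒴 → 𝒳)) ∘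
          (fun ω => (W k ω, (X i ω, Y i ω))) := rfl
    rw [h1, ← Measure.map_map hπ ((hW k).prodMk ((hX i).prodMk (hY i))),
      hindep_lab k i hi, ← Measure.map_prod_map _ _ measurable_id measurable_fst,
      Measure.map_id]
  -- unlabeled terms
  have hintA : ∀ k j, Integrable (fun ω => g (W k ω, Xt j ω)) μ := by
    intro k j
    haveI := hWmap k
    have hT : Measurable (fun ω => (W k ω, Xt j ω)) := (hW k).prodMk (hXt j)
    have := (hintf k)
    rw [← hindep_unlab k j] at this
    exact (integrable_map_measure this.aestronglyMeasurable hT.aemeasurable).mp this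
  have hA : ∀ k j, ∫ ω, g (W k ω, Xt j ω) ∂μ = I k := by
    intro k j
    haveI := hWmap k
    have hT : Measurable (fun ω => (W k ω, Xt j ω)) := (hW k).prodMk (hXt j)
    have hsm : AEStronglyMeasurable g (μ.map fun ω => (W k ω, Xt j ω)) := by
      rw [hindep_unlab k j]; exact (hintf k).aestronglyMeasurable
    show _ = ∫ q, g q ∂((μ.map (W k)).prod (P.map Prod.fst))
    rw [← hindep_unlab k j, MeasureTheory.integral_map hT.aemeasurable hsm]
  -- labeled in-fold terms
  have hintB : ∀ k, ∀ i ∈ D k, Integrable (fun ω => g (W k ω, X i ω)) μ := by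
    intro k i hi
    haveI := hWmap k
    have hT : Measurable (fun ω => (W k ω, X i ω)) := (hW k).prodMk (hX i)
    have := (hintf k)
    rw [← hlaw_lab k i hi] at this
    exact (integrable_map_measure this.aestronglyMeasurable hT.aemeasurable).mp this
  have hB : ∀ k, ∀ i ∈ D k, ∫ ω, g (W k ω, X i ω) ∂μ = I k := by
    intro k i hi
    haveI := hWmap k
    have hT : Measurable (fun ω => (W k ω, X i ω)) := (hW k).prodMk (hX i)
    have hsm : AEStronglyMeasurable g (μ.map fun ω => (W k ω, X i ω)) := by
      rw [hlaw_lab k i hi]; exact (hintf k).aestronglyMeasurable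
    show _ = ∫ q, g q ∂((μ.map (W k)).prod (P.map Prod.fst))
    rw [← hlaw_lab k i hi, MeasureTheory.integral_map hT.aemeasurable hsm]
  -- plain labeled terms
  have hintC : ∀ i, Integrable (fun ω => ℓ θ (X i ω) (Y i ω)) μ := by
    intro i
    have hT : Measurable (fun ω => (X i ω, Y i ω)) := (hX i).prodMk (hY i)
    have := hint
    rw [← hlab i] at this
    exact (integrable_map_measure this.aestronglyMeasurable hT.aemeasurable).mp this
  have hC : ∀ i, ∫ ω, ℓ θ (X i ω) (Y i ω) ∂μ = ∫ p, ℓ θ p.1 p.2 ∂P := by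
    intro i
    have hT : Measurable (fun ω => (X i ω, Y i ω)) := (hX i).prodMk (hY i)
    have hsm : AEStronglyMeasurable (fun p : 𝒳 × 𝒴 => ℓ θ p.1 p.2)
        (μ.map fun ω => (X i ω, Y i ω)) := by
      rw [hlab i]; exact hint.aestronglyMeasurable
    rw [← hlab i, MeasureTheory.integral_map hT.aemeasurable hsm]
  -- integrability of the three aggregate terms
  have hIA : Integrable (fun ω =>
      (1 / ((K : ℝ) * N)) * ∑ k, ∑ j, ℓ θ (Xt j ω) (f (W k ω) (Xt j ω))) μ :=
    (integrable_finset_sum _ fun k _ =>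
      integrable_finset_sum _ fun j _ => hintA k j).const_mul _
  have hIB : Integrable (fun ω =>
      (1 / (n : ℝ)) * ∑ k, ∑ i ∈ D k, ℓ θ (X i ω) (f (W k ω) (X i ω))) μ :=
    (integrable_finset_sum _ fun k _ =>
      integrable_finset_sum _ fun i hi => hintB k i hi).const_mul _
  have hIC : Integrable (fun ω =>
      (1 / (n : ℝ)) * ∑ i, ℓ θ (X i ω) (Y i ω)) μ :=
    (integrable_finset_sum _ fun i _ => hintC i).const_mul _
  have hIAB : Integrable (fun ω =>
      (1 / ((K : ℝ) * N)) * ∑ k, ∑ j, ℓ θ (Xt j ω) (f (W k ω) (Xt j ω))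
      - (1 / (n : ℝ)) * ∑ k, ∑ i ∈ D k, ℓ θ (X i ω) (f (W k ω) (X i ω))) μ := hIA.sub hIB
  rw [integral_add hIAB hIC, integral_sub hIA hIB,
    integral_const_mul, integral_const_mul, integral_const_mul,
    integral_finset_sum _ (fun k _ => integrable_finset_sum _ fun j _ => hintA k j),
    integral_finset_sum _ (fun k _ => integrable_finset_sum _ fun i hi => hintB k i hi),
    integral_finset_sum _ (fun i _ => hintC i)]
  have e1 : ∀ k : Fin K, ∫ ω, ∑ j, ℓ θ (Xt j ω) (f (W k ω) (Xt j ω)) ∂μ = (N : ℝ) * I k := by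
    intro k
    rw [integral_finset_sum _ fun j _ => hintA k j]
    simp [hA k, mul_comm]
  have e2 : ∀ k : Fin K, ∫ ω, ∑ i ∈ D k, ℓ θ (X i ω) (f (W k ω) (X i ω)) ∂μ
      = ((n : ℝ) / K) * I k := by
    intro k
    rw [integral_finset_sum _ fun i hi => hintB k i hi]
    rw [Finset.sum_congr rfl (fun i hi => hB k i hi), Finset.sum_const, hcard k,
      nsmul_eq_mul, Nat.cast_div hKn (by exact_mod_cast hK.ne')]
  simp only [hg_def, e1, e2, hC]
  have hKne : (K : ℝ) ≠ 0 := by exact_mod_cast hK.ne'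
  have hNne : (N : ℝ) ≠ 0 := by exact_mod_cast hN.ne'
  have hnne : (n : ℝ) ≠ 0 := by exact_mod_cast hn.ne'
  rw [Finset.sum_const, Finset.card_univ, Fintype.card_fin, nsmul_eq_mul,
    ← Finset.mul_sum, ← Finset.mul_sum]
  field_simp
  ring
end

section
/- For every λ ∈ [0,1], the tuned CPPI loss L^CP_λ(θ) = (1/n)∑_{i=1}^n ℓ_θ(X_i,Y_i) + λ[(1/(KN))∑_{k=1}^K ∑_{i=1}^N ℓ_θ(X̃_i, f^{(k)}(X̃_i)) − (1/n)∑_{k=1}^K ∑_{i∈D^{(k)}} ℓ_θ(X_i, f^{(k)}(X_i))] satisfies E[L^CP_λ(θ)] = L(θ) for every θ. -/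
open MeasureTheory

/-- For every λ ∈ [0,1], the tuned CPPI loss is unbiased for the
population loss.
The model trained leaving out fold `D k` is `fun x => f (W k ω) x`, where `W k` is the
(random) training outcome, independent of the fold-`k` labeled data and of the unlabeled
data. -/
theorem tuned_cppi_unbiased
    {Ω 𝒳 𝒴 𝕎 Θ : Type*} [MeasurableSpace Ω] [MeasurableSpace 𝒳] [MeasurableSpace 𝒴]
    [MeasurableSpace 𝕎]
    (μ : Measure Ω) [IsProbabilityMeasure μ]
    (P : Measure (𝒳 × 𝒴)) [IsProbabilityMeasure P]
    (n N K : ℕ) (hn : 0 < n) (hN : 0 < N) (hK : 0 < K) (hKn : K ∣ n)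
    (D : Fin K → Finset (Fin n))
    (hdisj : ∀ k l, k ≠ l → Disjoint (D k) (D l))
    (hcover : ∀ i : Fin n, ∃ k, i ∈ D k)
    (hcard : ∀ k, (D k).card = n / K)
    (X : Fin n → Ω → 𝒳) (Y : Fin n → Ω → 𝒴) (Xt : Fin N → Ω → 𝒳) (W : Fin K → Ω → 𝕎)
    (hX : ∀ i, Measurable (X i)) (hY : ∀ i, Measurable (Y i)) (hXt : ∀ i, Measurable (Xt i))
    (hW : ∀ k, Measurable (W k))
    (f : 𝕎 → 𝒳 → 𝒴) (hf : Measurable fun q : 𝕎 × 𝒳 => f q.1 q.2)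
    (hlab : ∀ i, μ.map (fun ω => (X i ω, Y i ω)) = P)
    -- the model trained without fold k is independent of the fold-k labeled data:
    (hindep_lab : ∀ k, ∀ i ∈ D k,
      μ.map (fun ω => (W k ω, (X i ω, Y i ω))) = (μ.map (W k)).prod P)
    -- the models are independent of the unlabeled data:
    (hindep_unlab : ∀ k j,
      μ.map (fun ω => (W k ω, Xt j ω)) = (μ.map (W k)).prod (P.map Prod.fst))
    (ℓ : Θ → 𝒳 → 𝒴 → ℝ) (θ : Θ)
    (hint : Integrable (fun p : 𝒳 × 𝒴 => ℓ θ p.1 p.2) P)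
    (hintf : ∀ k, Integrable (fun q : 𝕎 × 𝒳 => ℓ θ q.2 (f q.1 q.2))
      ((μ.map (W k)).prod (P.map Prod.fst)))
    (lam : ℝ) (hlam : lam ∈ Set.Icc (0 : ℝ) 1) :
    ∫ ω, ((1 / (n : ℝ)) * ∑ i, ℓ θ (X i ω) (Y i ω)
        + lam * ((1 / ((K : ℝ) * N)) * ∑ k, ∑ j, ℓ θ (Xt j ω) (f (W k ω) (Xt j ω))
          - (1 / (n : ℝ)) * ∑ k, ∑ i ∈ D k, ℓ θ (X i ω) (f (W k ω) (X i ω)))) ∂μ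
      = ∫ p, ℓ θ p.1 p.2 ∂P := by

  classical
  have hn' : (n : ℝ) ≠ 0 := Nat.cast_ne_zero.mpr hn.ne'
  have hN' : (N : ℝ) ≠ 0 := Nat.cast_ne_zero.mpr hN.ne'
  have hK' : (K : ℝ) ≠ 0 := Nat.cast_ne_zero.mpr hK.ne'
  set I : ℝ := ∫ p, ℓ θ p.1 p.2 ∂P with hI
  set c : Fin K → ℝ := fun k =>
    ∫ q : 𝕎 × 𝒳, ℓ θ q.2 (f q.1 q.2) ∂((μ.map (W k)).prod (P.map Prod.fst)) with hc
  -- labeled term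
  have hAint : ∀ i, Integrable (fun ω => ℓ θ (X i ω) (Y i ω)) μ := by
    intro i
    have h := hint
    rw [← hlab i] at h
    exact (integrable_map_measure h.aestronglyMeasurable
      (((hX i).prodMk (hY i)).aemeasurable)).mp h
  have hAeq : ∀ i, ∫ ω, ℓ θ (X i ω) (Y i ω) ∂μ = I := by
    intro i
    have h := hint
    rw [← hlab i] at h
    rw [hI, ← hlab i, integral_map (((hX i).prodMk (hY i)).aemeasurable)
      h.aestronglyMeasurable]
  -- unlabeled term
  have hBint : ∀ k j, Integrable (fun ω => ℓ θ (Xt j ω) (f (W k ω) (Xt j ω))) μ := by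
    intro k j
    have h := hintf k
    rw [← hindep_unlab k j] at h
    exact (integrable_map_measure h.aestronglyMeasurable
      (((hW k).prodMk (hXt j)).aemeasurable)).mp h
  have hBeq : ∀ k j, ∫ ω, ℓ θ (Xt j ω) (f (W k ω) (Xt j ω)) ∂μ = c k := by
    intro k j
    have h := hintf k
    rw [← hindep_unlab k j] at h
    simp only [hc]
    rw [← hindep_unlab k j, integral_map (((hW k).prodMk (hXt j)).aemeasurable)
      h.aestronglyMeasurable]
  -- labeled-with-model term
  have hmapC : ∀ k, ∀ i ∈ D k,
      μ.map (fun ω => (W k ω, X i ω)) = (μ.map (W k)).prod (P.map Prod.fst) := by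
    intro k i hi
    haveI : IsProbabilityMeasure (μ.map (W k)) :=
      Measure.isProbabilityMeasure_map (hW k).aemeasurable
    have hcomp : (fun ω => (W k ω, X i ω))
        = (Prod.map (id : 𝕎 → 𝕎) (Prod.fst : 𝒳 × 𝒴 → 𝒳))
            ∘ (fun ω => (W k ω, (X i ω, Y i ω))) := rfl
    rw [hcomp, ← Measure.map_map (measurable_id.prodMap measurable_fst)
      ((hW k).prodMk ((hX i).prodMk (hY i))), hindep_lab k i hi,
      ← Measure.map_prod_map _ _ measurable_id measurable_fst, Measure.map_id]
  have hCint : ∀ k, ∀ i ∈ D k,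
      Integrable (fun ω => ℓ θ (X i ω) (f (W k ω) (X i ω))) μ := by
    intro k i hi
    have h := hintf k
    rw [← hmapC k i hi] at h
    exact (integrable_map_measure h.aestronglyMeasurable
      (((hW k).prodMk (hX i)).aemeasurable)).mp h
  have hCeq : ∀ k, ∀ i ∈ D k,
      ∫ ω, ℓ θ (X i ω) (f (W k ω) (X i ω)) ∂μ = c k := by
    intro k i hi
    have h := hintf k
    rw [← hmapC k i hi] at h
    simp only [hc]
    rw [← hmapC k i hi, integral_map (((hW k).prodMk (hX i)).aemeasurable)
      h.aestronglyMeasurable]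
  -- integrability of the pieces
  have hAsum : Integrable (fun ω => ∑ i, ℓ θ (X i ω) (Y i ω)) μ :=
    integrable_finset_sum _ fun i _ => hAint i
  have hBsum : Integrable (fun ω => ∑ k, ∑ j, ℓ θ (Xt j ω) (f (W k ω) (Xt j ω))) μ :=
    integrable_finset_sum _ fun k _ => integrable_finset_sum _ fun j _ => hBint k j
  have hCsum : Integrable (fun ω => ∑ k, ∑ i ∈ D k, ℓ θ (X i ω) (f (W k ω) (X i ω))) μ :=
    integrable_finset_sum _ fun k _ => integrable_finset_sum _ fun i hi => hCint k i hi
  have h1 : Integrable (fun ω => (1 / (n : ℝ)) * ∑ i, ℓ θ (X i ω) (Y i ω)) μ :=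
    hAsum.const_mul _
  have h2 : Integrable (fun ω =>
      lam * ((1 / ((K : ℝ) * N)) * ∑ k, ∑ j, ℓ θ (Xt j ω) (f (W k ω) (Xt j ω))
        - (1 / (n : ℝ)) * ∑ k, ∑ i ∈ D k, ℓ θ (X i ω) (f (W k ω) (X i ω)))) μ :=
    (((hBsum.const_mul _).sub (hCsum.const_mul _)).const_mul _)
  rw [integral_add h1 h2, integral_const_mul, integral_const_mul, integral_sub
    (hBsum.const_mul _) (hCsum.const_mul _), integral_const_mul, integral_const_mul,
    integral_finset_sum _ (fun i _ => hAint i),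
    integral_finset_sum _ (fun k _ => integrable_finset_sum _ fun j _ => hBint k j),
    integral_finset_sum _ (fun k _ => integrable_finset_sum _ fun i hi => hCint k i hi)]
  have e1 : ∑ i : Fin n, ∫ ω, ℓ θ (X i ω) (Y i ω) ∂μ = (n : ℝ) * I := by
    simp [hAeq, Finset.sum_const, Finset.card_univ]
  have e2 : ∀ k : Fin K, (∫ ω, ∑ j : Fin N, ℓ θ (Xt j ω) (f (W k ω) (Xt j ω)) ∂μ)
      = (N : ℝ) * c k := by
    intro k
    rw [integral_finset_sum _ (fun j _ => hBint k j)]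
    simp [hBeq k, Finset.sum_const, Finset.card_univ]
  have e3 : ∀ k : Fin K, (∫ ω, ∑ i ∈ D k, ℓ θ (X i ω) (f (W k ω) (X i ω)) ∂μ)
      = ((n : ℝ) / K) * c k := by
    intro k
    rw [integral_finset_sum _ (fun i hi => hCint k i hi),
      Finset.sum_congr rfl (fun i hi => hCeq k i hi), Finset.sum_const, hcard k,
      nsmul_eq_mul, Nat.cast_div hKn hK']
  rw [e1]
  rw [Finset.sum_congr rfl (fun k _ => e2 k), Finset.sum_congr rfl (fun k _ => e3 k),
    ← Finset.mul_sum, ← Finset.mul_sum]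
  field_simp
  ring
end

section
/- The map λ ↦ tr(Σ_λ), where Σ_λ = H^{-1}(r·V^λ_{f̄} + V^λ_Δ)H^{-1} with V^λ_{f̄} = λ²·Var(∇ℓ^{f̄}) and V^λ_Δ = Var(∇ℓ − λ∇ℓ^{f̄}), is a quadratic polynomial in λ with leading coefficient (1+r)·tr(H^{-1}Var(∇ℓ^{f̄})H^{-1}) ≥ 0, and if tr(H^{-1}Var(∇ℓ^{f̄})H^{-1}) > 0 its unique minimizer is λ* = tr(H^{-1}(Cov(∇ℓ, ∇ℓ^{f̄}) + Cov(∇ℓ^{f̄}, ∇ℓ))H^{-1}) / (2(1+r)·tr(H^{-1}Var(∇ℓ^{f̄})H^{-1})). -/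
open MeasureTheory ProbabilityTheory Matrix

private lemma l2_mul_integrable {Ω : Type*} [MeasurableSpace Ω] {μ : Measure Ω}
    {f g : Ω → ℝ} (hf : MemLp f 2 μ) (hg : MemLp g 2 μ) :
    Integrable (fun ω => f ω * g ω) μ := by
  have h1 := (hf.add hg).integrable_sq
  have h2 := hf.integrable_sq
  have h3 := hg.integrable_sq
  have heq : (fun ω => f ω * g ω)
      = fun ω => (((f + g) ω) ^ 2 - (f ω) ^ 2 - (g ω) ^ 2) / 2 := by
    funext ω; simp only [Pi.add_apply]; ring
  rw [heq]
  exact ((h1.sub h2).sub h3).div_const 2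

/-- λ ↦ tr(Σ_λ) with Σ_λ = H⁻¹(r·λ²·Var(∇ℓ^f̄) + Var(∇ℓ − λ∇ℓ^f̄))H⁻¹ is a
quadratic polynomial in λ with nonnegative leading coefficient
(1+r)·tr(H⁻¹Var(∇ℓ^f̄)H⁻¹), and if the latter trace is positive, its unique minimizer is
λ* = tr(H⁻¹(Cov(∇ℓ,∇ℓ^f̄) + Cov(∇ℓ^f̄,∇ℓ))H⁻¹) / (2(1+r)·tr(H⁻¹Var(∇ℓ^f̄)H⁻¹)).
Here `G = ∇ℓ` and `Gf = ∇ℓ^f̄`. -/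
theorem tuned_cppi_trace_quadratic
    {Ω : Type*} [MeasurableSpace Ω] (μ : Measure Ω) [IsProbabilityMeasure μ]
    (d : ℕ) (G Gf : Ω → Fin d → ℝ)
    (hG : ∀ i, MemLp (fun ω => G ω i) 2 μ) (hGf : ∀ i, MemLp (fun ω => Gf ω i) 2 μ)
    (H : Matrix (Fin d) (Fin d) ℝ) (hHsym : H.IsSymm) (hHinv : IsUnit H.det)
    (r : ℝ) (hr : 0 < r)
    (Cov : (Ω → Fin d → ℝ) → (Ω → Fin d → ℝ) → Matrix (Fin d) (Fin d) ℝ)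
    (hCov : ∀ U V, Cov U V = Matrix.of fun i j =>
      ∫ ω, (U ω i - ∫ ω', U ω' i ∂μ) * (V ω j - ∫ ω', V ω' j ∂μ) ∂μ)
    (T : ℝ → ℝ)
    (hT : ∀ lam, T lam = Matrix.trace (H⁻¹
      * (r • (lam ^ 2 • Cov Gf Gf)
        + Cov (fun ω i => G ω i - lam * Gf ω i) (fun ω i => G ω i - lam * Gf ω i))
      * H⁻¹))
    (A : ℝ) (hA : A = Matrix.trace (H⁻¹ * Cov Gf Gf * H⁻¹))
    (lamStar : ℝ)
    (hls : lamStar = Matrix.trace (H⁻¹ * (Cov G Gf + Cov Gf G) * H⁻¹)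
      / (2 * (1 + r) * A)) :
    (∃ b c : ℝ, ∀ lam, T lam = (1 + r) * A * lam ^ 2 + b * lam + c) ∧
    0 ≤ A ∧
    (0 < A → ∀ lam, lam ≠ lamStar → T lamStar < T lam) := by
  -- basic integrability
  have hGint : ∀ i, Integrable (fun ω => G ω i) μ := fun i => (hG i).integrable one_le_two
  have hGfint : ∀ i, Integrable (fun ω => Gf ω i) μ := fun i => (hGf i).integrable one_le_two
  -- centered functions
  have hc : ∀ i, MemLp (fun ω => G ω i - ∫ ω', G ω' i ∂μ) 2 μ :=
    fun i => (hG i).sub (memLp_const _)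
  have hcf : ∀ i, MemLp (fun ω => Gf ω i - ∫ ω', Gf ω' i ∂μ) 2 μ :=
    fun i => (hGf i).sub (memLp_const _)
  have hcc : ∀ i j, Integrable
      (fun ω => (G ω i - ∫ ω', G ω' i ∂μ) * (G ω j - ∫ ω', G ω' j ∂μ)) μ :=
    fun i j => l2_mul_integrable (hc i) (hc j)
  have hccf : ∀ i j, Integrable
      (fun ω => (G ω i - ∫ ω', G ω' i ∂μ) * (Gf ω j - ∫ ω', Gf ω' j ∂μ)) μ :=
    fun i j => l2_mul_integrable (hc i) (hcf j)
  have hcfc : ∀ i j, Integrable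
      (fun ω => (Gf ω i - ∫ ω', Gf ω' i ∂μ) * (G ω j - ∫ ω', G ω' j ∂μ)) μ :=
    fun i j => l2_mul_integrable (hcf i) (hc j)
  have hcfcf : ∀ i j, Integrable
      (fun ω => (Gf ω i - ∫ ω', Gf ω' i ∂μ) * (Gf ω j - ∫ ω', Gf ω' j ∂μ)) μ :=
    fun i j => l2_mul_integrable (hcf i) (hcf j)
  -- covariance bilinearity
  have hmat : ∀ lam : ℝ, Cov (fun ω i => G ω i - lam * Gf ω i) (fun ω i => G ω i - lam * Gf ω i)
      = Cov G G - lam • (Cov G Gf + Cov Gf G) + lam ^ 2 • Cov Gf Gf := by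
    intro lam
    have hmean : ∀ k, (∫ ω', (G ω' k - lam * Gf ω' k) ∂μ)
        = (∫ ω', G ω' k ∂μ) - lam * ∫ ω', Gf ω' k ∂μ := by
      intro k
      rw [integral_sub (hGint k) ((hGfint k).const_mul lam), integral_const_mul]
    ext i j
    simp only [hCov, Matrix.of_apply, Matrix.add_apply, Matrix.sub_apply, Matrix.smul_apply,
      smul_eq_mul, hmean]
    have hexp : (fun ω => (G ω i - lam * Gf ω i - ((∫ ω', G ω' i ∂μ) - lam * ∫ ω', Gf ω' i ∂μ))
        * (G ω j - lam * Gf ω j - ((∫ ω', G ω' j ∂μ) - lam * ∫ ω', Gf ω' j ∂μ)))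
        = fun ω => ((G ω i - ∫ ω', G ω' i ∂μ) * (G ω j - ∫ ω', G ω' j ∂μ)
          - lam * ((G ω i - ∫ ω', G ω' i ∂μ) * (Gf ω j - ∫ ω', Gf ω' j ∂μ)
            + (Gf ω i - ∫ ω', Gf ω' i ∂μ) * (G ω j - ∫ ω', G ω' j ∂μ)))
          + lam ^ 2 * ((Gf ω i - ∫ ω', Gf ω' i ∂μ) * (Gf ω j - ∫ ω', Gf ω' j ∂μ)) := by
      funext ω; ring
    have hint1 : Integrable (fun ω => (G ω i - ∫ ω', G ω' i ∂μ) * (Gf ω j - ∫ ω', Gf ω' j ∂μ)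
        + (Gf ω i - ∫ ω', Gf ω' i ∂μ) * (G ω j - ∫ ω', G ω' j ∂μ)) μ := (hccf i j).add (hcfc i j)
    have hint2 : Integrable (fun ω => lam * ((G ω i - ∫ ω', G ω' i ∂μ)
        * (Gf ω j - ∫ ω', Gf ω' j ∂μ)
        + (Gf ω i - ∫ ω', Gf ω' i ∂μ) * (G ω j - ∫ ω', G ω' j ∂μ))) μ := hint1.const_mul lam
    have hint3 : Integrable (fun ω => (G ω i - ∫ ω', G ω' i ∂μ) * (G ω j - ∫ ω', G ω' j ∂μ)
        - lam * ((G ω i - ∫ ω', G ω' i ∂μ) * (Gf ω j - ∫ ω', Gf ω' j ∂μ)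
          + (Gf ω i - ∫ ω', Gf ω' i ∂μ) * (G ω j - ∫ ω', G ω' j ∂μ))) μ := (hcc i j).sub hint2
    have hint4 : Integrable (fun ω => lam ^ 2 * ((Gf ω i - ∫ ω', Gf ω' i ∂μ)
        * (Gf ω j - ∫ ω', Gf ω' j ∂μ))) μ := (hcfcf i j).const_mul _
    rw [hexp, integral_add hint3 hint4, integral_sub (hcc i j) hint2,
      integral_const_mul, integral_const_mul, integral_add (hccf i j) (hcfc i j)]
  -- the quadratic form of T
  set B : ℝ := Matrix.trace (H⁻¹ * (Cov G Gf + Cov Gf G) * H⁻¹) with hB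
  set c0 : ℝ := Matrix.trace (H⁻¹ * Cov G G * H⁻¹) with hc0
  have hquad : ∀ lam, T lam = (1 + r) * A * lam ^ 2 + (-B) * lam + c0 := by
    intro lam
    rw [hT lam, hmat lam, hA, hB, hc0]
    simp only [Matrix.mul_add, Matrix.add_mul, Matrix.mul_sub, Matrix.sub_mul,
      Matrix.mul_smul, Matrix.smul_mul, trace_add, trace_sub, trace_smul, smul_eq_mul]
    ring
  refine ⟨⟨-B, c0, hquad⟩, ?_, ?_⟩
  · -- nonnegativity of A
    have hMsym : (H⁻¹)ᵀ = H⁻¹ := by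
      rw [Matrix.transpose_nonsing_inv, hHsym.eq]
    have hentry : ∀ i j, (Cov Gf Gf) i j
        = ∫ ω, (Gf ω i - ∫ ω', Gf ω' i ∂μ) * (Gf ω j - ∫ ω', Gf ω' j ∂μ) ∂μ := by
      intro i j; rw [hCov]; rfl
    have hdiag : ∀ k, (H⁻¹ * Cov Gf Gf * H⁻¹) k k
        = ∫ ω, (∑ i, H⁻¹ k i * (Gf ω i - ∫ ω', Gf ω' i ∂μ)) ^ 2 ∂μ := by
      intro k
      have hsum : ∀ ω : Ω, (∑ i, H⁻¹ k i * (Gf ω i - ∫ ω', Gf ω' i ∂μ)) ^ 2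
          = ∑ i, ∑ j, H⁻¹ k i * H⁻¹ k j
            * ((Gf ω i - ∫ ω', Gf ω' i ∂μ) * (Gf ω j - ∫ ω', Gf ω' j ∂μ)) := by
        intro ω
        rw [sq, Finset.sum_mul_sum]
        exact Finset.sum_congr rfl fun i _ => Finset.sum_congr rfl fun j _ => by ring
      have key : ∫ ω, (∑ i, H⁻¹ k i * (Gf ω i - ∫ ω', Gf ω' i ∂μ)) ^ 2 ∂μ
          = ∑ i, ∑ j, H⁻¹ k i * H⁻¹ k j
            * ∫ ω, (Gf ω i - ∫ ω', Gf ω' i ∂μ) * (Gf ω j - ∫ ω', Gf ω' j ∂μ) ∂μ := by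
        simp_rw [hsum]
        rw [integral_finset_sum _ fun i _ => (integrable_finset_sum _
          fun j _ => ((hcfcf i j).const_mul _))]
        refine Finset.sum_congr rfl fun i _ => ?_
        rw [integral_finset_sum _ fun j _ => ((hcfcf i j).const_mul _)]
        exact Finset.sum_congr rfl fun j _ => (integral_const_mul _ _)
      rw [key]
      simp only [Matrix.mul_apply, Finset.sum_mul]
      rw [Finset.sum_comm]
      refine Finset.sum_congr rfl fun i _ => Finset.sum_congr rfl fun j _ => ?_
      have hjk : H⁻¹ j k = H⁻¹ k j := by
        calc H⁻¹ j k = (H⁻¹)ᵀ k j := rfl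
        _ = H⁻¹ k j := by rw [hMsym]
      rw [hentry i j, hjk]; ring
    rw [hA, Matrix.trace]
    refine Finset.sum_nonneg fun k _ => ?_
    rw [Matrix.diag_apply, hdiag k]
    exact integral_nonneg fun ω => sq_nonneg _
  · -- unique minimizer
    intro hApos lam hne
    have ha : 0 < (1 + r) * A := mul_pos (by linarith) hApos
    have hne0 : (2 * (1 + r) * A) ≠ 0 := ne_of_gt (by nlinarith)
    have hls2 : lamStar * (2 * (1 + r) * A) = B := by
      rw [hls, div_mul_cancel₀ _ hne0]
    rw [hquad lam, hquad lamStar]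
    have h3 : 0 < (lam - lamStar) ^ 2 := sq_pos_of_ne_zero (sub_ne_zero.mpr hne)
    have hdiff : (1 + r) * A * lam ^ 2 + -B * lam + c0
        - ((1 + r) * A * lamStar ^ 2 + -B * lamStar + c0)
        = ((1 + r) * A) * (lam - lamStar) ^ 2 := by
      have hBe : B = lamStar * (2 * (1 + r) * A) := hls2.symm
      rw [hBe]; ring
    linarith [mul_pos ha h3, hdiff]
end
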